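/- For a Laurent polynomial f ∈ ℤ[t,t⁻¹], the following are equivalent: (1) f(1) = 0 and f is reciprocal, i.e., f(t) = f(t⁻¹); (2) there exists g ∈ ℤ[t,t⁻¹] with g(1) = 0 such that f(t) = g(t) + g(t⁻¹). -/

import Mathlib

open LaurentPolynomial

/-- Evaluation of a Laurent polynomial at `t = 1`, i.e. the sum of its coefficients. -/
def evalOne (f : LaurentPolynomial ℤ) : ℤ := (AddMonoidAlgebra.coeff f).sum fun _ c => c

lemma evalOne_add (a b : LaurentPolynomial ℤ) : evalOne (a + b) = evalOne a + evalOne b := by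
  unfold evalOne; rw [AddMonoidAlgebra.coeff_add]; exact Finsupp.sum_add_index' (fun _ => rfl) (fun _ _ _ => rfl)

noncomputable def sgl (n c : ℤ) : LaurentPolynomial ℤ := AddMonoidAlgebra.ofCoeff (Finsupp.single n c)

lemma sgl_apply (n c m : ℤ) : (sgl n c).coeff m = if n = m then c else 0 := Finsupp.single_apply

lemma evalOne_single (n : ℤ) (c : ℤ) : evalOne (sgl n c) = c :=
  show (Finsupp.single n c).sum (fun _ c => c) = c from Finsupp.sum_single_index rfl

lemma evalOne_mapDomain (h : LaurentPolynomial ℤ) :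
    evalOne (AddMonoidAlgebra.ofCoeff (Finsupp.mapDomain Neg.neg h.coeff) : LaurentPolynomial ℤ) = evalOne h :=
  Finsupp.sum_mapDomain_index (fun _ => rfl) (fun _ _ _ => rfl)

lemma neg_inj' : Function.Injective (Neg.neg : ℤ → ℤ) := neg_injective

lemma mapDomain_neg_apply (h : LaurentPolynomial ℤ) (n : ℤ) :
    (AddMonoidAlgebra.ofCoeff (Finsupp.mapDomain Neg.neg h.coeff) : LaurentPolynomial ℤ).coeff n = h.coeff (-n) := by
  have := Finsupp.mapDomain_apply neg_inj' h.coeff (-n)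
  simpa using this

/-- For a Laurent polynomial `f ∈ ℤ[t,t⁻¹]`, one has `f(1) = 0` and `f(t) = f(t⁻¹)`
iff `f(t) = g(t) + g(t⁻¹)` for some `g` with `g(1) = 0`. -/
theorem evalOne_eq_zero_and_reciprocal_iff (f : LaurentPolynomial ℤ) :
    (evalOne f = 0 ∧ invert f = f) ↔
      ∃ g : LaurentPolynomial ℤ, evalOne g = 0 ∧ f = g + invert g := by
  constructor
  · rintro ⟨h0, hrec⟩
    have hsym : ∀ n : ℤ, f.coeff (-n) = f.coeff n := fun n => by
      conv_rhs => rw [← hrec]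
      exact (invert_apply f n).symm
    -- positive, negative, zero parts
    set P : LaurentPolynomial ℤ := AddMonoidAlgebra.ofCoeff (f.coeff.filter (fun k => 0 < k)) with hP
    set N : LaurentPolynomial ℤ := AddMonoidAlgebra.ofCoeff (f.coeff.filter (fun k => k < 0)) with hN
    have hPapp : ∀ n : ℤ, P.coeff n = if 0 < n then f.coeff n else 0 := fun n =>
      Finsupp.filter_apply (fun k => 0 < k) f.coeff n
    have hNapp : ∀ n : ℤ, N.coeff n = if n < 0 then f.coeff n else 0 := fun n =>
      Finsupp.filter_apply (fun k => k < 0) f.coeff n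
    have hNmap : N = (AddMonoidAlgebra.ofCoeff (Finsupp.mapDomain Neg.neg P.coeff) : LaurentPolynomial ℤ) := by
      ext n
      rw [mapDomain_neg_apply, hNapp, hPapp, hsym]
      simp only [neg_pos]
    have hsplit : f = P + N + sgl 0 (f.coeff 0) := by
      ext n
      show f.coeff n = (P.coeff n + N.coeff n) + (sgl 0 (f.coeff 0)).coeff n
      simp only [hPapp, hNapp, sgl_apply]
      rcases lt_trichotomy n 0 with h | h | h
      · simp [h, not_lt.mpr h.le, h.ne']
      · subst h; simp
      · simp [h, not_lt.mpr h.le, h.ne]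
    have hNP : evalOne N = evalOne P := by rw [hNmap, evalOne_mapDomain]
    have hf0 : f.coeff 0 = -(2 * evalOne P) := by
      have := congrArg evalOne hsplit
      rw [h0, evalOne_add, evalOne_add, evalOne_single, hNP] at this
      linarith
    refine ⟨P + sgl 0 (-(evalOne P)), ?_, ?_⟩
    · rw [evalOne_add, evalOne_single]; ring
    · ext n
      show f.coeff n = _ + (invert _).coeff n
      rw [invert_apply]
      show f.coeff n = (P.coeff n + (sgl 0 (-(evalOne P))).coeff n) + (P.coeff (-n) + (sgl 0 (-(evalOne P))).coeff (-n))
      simp only [sgl_apply, hPapp]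
      rcases lt_trichotomy n 0 with h | h | h
      · rw [← hsym n]
        simp [h, not_lt.mpr h.le, h.ne, h.ne', neg_pos.mpr h]
      · subst h; simp [hf0]; ring
      · simp [h, not_lt.mpr h.le, h.ne, h.ne', not_lt.mpr (neg_nonpos.mpr h.le)]
  · rintro ⟨g, hg0, rfl⟩
    have hinv : evalOne (invert g) = evalOne g := by
      have heq : (invert g : LaurentPolynomial ℤ) =
          (AddMonoidAlgebra.ofCoeff (Finsupp.mapDomain Neg.neg g.coeff) : LaurentPolynomial ℤ) := by
        ext n
        rw [invert_apply, mapDomain_neg_apply]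
      rw [heq, evalOne_mapDomain]
    constructor
    · rw [evalOne_add, hg0, hinv, hg0]; ring
    · have := involutive_invert (R := ℤ) g
      simp [map_add, this, add_comm]
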